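/- Let v ∈ ℝ² satisfy ℓ₊(v) > 0 and ℓ₋(v) > 0. Then there exists an integer k such that the vector w = (M^k).mulVec v (an integer power of the invertible matrix M, which has determinant 1) lies in the cone C, i.e. w 0 ≥ 0 and w 0 + 6·(w 1) ≥ 0. -/

import Mathlib

/-- The linear form `ℓ₊(x,y) = ((2-√2)x + (2+√2)y)/8`. -/
noncomputable def lplus (v : Fin 2 → ℝ) : ℝ :=
  ((2 - Real.sqrt 2) * v 0 + (2 + Real.sqrt 2) * v 1) / 8

/-- The linear form `ℓ₋(x,y) = ((2+√2)x + (2-√2)y)/8`. -/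
noncomputable def lminus (v : Fin 2 → ℝ) : ℝ :=
  ((2 + Real.sqrt 2) * v 0 + (2 - Real.sqrt 2) * v 1) / 8

private lemma s_sq : Real.sqrt 2 * Real.sqrt 2 = 2 := Real.mul_self_sqrt (by norm_num)

private lemma s_pos : 0 < Real.sqrt 2 := Real.sqrt_pos.mpr (by norm_num)

private lemma s_gt_one : 1 < Real.sqrt 2 := by nlinarith [s_sq, s_pos]

private lemma s_lt : Real.sqrt 2 < 99 / 70 := by nlinarith [s_sq, s_pos]

private lemma lam_ne : (17 + 12 * Real.sqrt 2 : ℝ) ≠ 0 := by nlinarith [s_pos]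

private lemma lam_inv : (17 + 12 * Real.sqrt 2 : ℝ)⁻¹ = 17 - 12 * Real.sqrt 2 :=
  inv_eq_of_mul_eq_one_right (by linear_combination (-144 : ℝ) * s_sq)

private lemma M_det : IsUnit (!![(-1 : ℝ), -6; 6, 35]).det := by
  norm_num [Matrix.det_fin_two_of]

private lemma M_inv : (!![(-1 : ℝ), -6; 6, 35])⁻¹ = !![35, 6; -6, -1] :=
  Matrix.inv_eq_right_inv (by norm_num [Matrix.mul_fin_two, ← Matrix.one_fin_two])

private lemma key (v : Fin 2 → ℝ) (k : ℤ) :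
    (!![(-1 : ℝ), -6; 6, 35] ^ k).mulVec v = fun i =>
      lplus v * (17 + 12 * Real.sqrt 2) ^ k * ![1 - Real.sqrt 2, 1 + Real.sqrt 2] i
      + lminus v * (17 + 12 * Real.sqrt 2) ^ (-k) * ![1 + Real.sqrt 2, 1 - Real.sqrt 2] i := by
  induction k using Int.induction_on with
  | zero =>
    simp only [zpow_zero, Matrix.one_mulVec, neg_zero]
    funext i
    fin_cases i <;>
      simp [lplus, lminus] <;>
      [linear_combination ((v 1 - v 0) / 4) * s_sq;
       linear_combination ((v 0 - v 1) / 4) * s_sq]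
  | succ i ih =>
    have hstep : (!![(-1 : ℝ), -6; 6, 35]) ^ ((i : ℤ) + 1)
        = !![(-1 : ℝ), -6; 6, 35] * !![(-1 : ℝ), -6; 6, 35] ^ (i : ℤ) := by
      rw [show ((i : ℤ) + 1) = 1 + (i : ℤ) by ring, Matrix.zpow_add M_det, zpow_one]
    rw [hstep, ← Matrix.mulVec_mulVec, ih]
    have e1 : (17 + 12 * Real.sqrt 2 : ℝ) ^ ((i : ℤ) + 1)
        = (17 + 12 * Real.sqrt 2 : ℝ) ^ (i : ℤ) * (17 + 12 * Real.sqrt 2) :=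
      zpow_add_one₀ lam_ne _
    have e2 : (17 + 12 * Real.sqrt 2 : ℝ) ^ (-((i : ℤ) + 1))
        = (17 + 12 * Real.sqrt 2 : ℝ) ^ (-(i : ℤ)) * (17 - 12 * Real.sqrt 2) := by
      rw [show (-((i : ℤ) + 1)) = (-(i : ℤ)) - 1 by ring, zpow_sub_one₀ lam_ne, lam_inv]
    funext j
    fin_cases j <;>
      simp only [Matrix.mulVec, dotProduct, Fin.sum_univ_two, Matrix.cons_val',
        Matrix.cons_val_zero, Matrix.cons_val_one, Matrix.head_cons, Matrix.head_fin_const,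
        Matrix.empty_val', Matrix.cons_val_fin_one, Fin.isValue, Fin.mk_zero, Fin.mk_one, Matrix.of_apply] <;>
      rw [e1, e2] <;>
      [linear_combination (12 * (lplus v * (17 + 12 * Real.sqrt 2 : ℝ) ^ (i : ℤ)
          + lminus v * (17 + 12 * Real.sqrt 2 : ℝ) ^ (-(i : ℤ)))) * s_sq;
       linear_combination (-12 * (lplus v * (17 + 12 * Real.sqrt 2 : ℝ) ^ (i : ℤ)
          + lminus v * (17 + 12 * Real.sqrt 2 : ℝ) ^ (-(i : ℤ)))) * s_sq]
  | pred i ih =>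
    have hstep : (!![(-1 : ℝ), -6; 6, 35]) ^ (-(i : ℤ) - 1)
        = !![(35 : ℝ), 6; -6, -1] * !![(-1 : ℝ), -6; 6, 35] ^ (-(i : ℤ)) := by
      rw [show (-(i : ℤ) - 1) = (-1) + (-(i : ℤ)) by ring, Matrix.zpow_add M_det,
        Matrix.zpow_neg_one, M_inv]
    rw [hstep, ← Matrix.mulVec_mulVec, ih]
    have e1 : (17 + 12 * Real.sqrt 2 : ℝ) ^ (-(i : ℤ) - 1)
        = (17 + 12 * Real.sqrt 2 : ℝ) ^ (-(i : ℤ)) * (17 - 12 * Real.sqrt 2) := by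
      rw [zpow_sub_one₀ lam_ne, lam_inv]
    have e2 : (17 + 12 * Real.sqrt 2 : ℝ) ^ (-(-(i : ℤ) - 1))
        = (17 + 12 * Real.sqrt 2 : ℝ) ^ (-(-(i : ℤ))) * (17 + 12 * Real.sqrt 2) := by
      rw [show (-(-(i : ℤ) - 1)) = (-(-(i : ℤ))) + 1 by ring, zpow_add_one₀ lam_ne]
    funext j
    fin_cases j <;>
      simp only [Matrix.mulVec, dotProduct, Fin.sum_univ_two, Matrix.cons_val',
        Matrix.cons_val_zero, Matrix.cons_val_one, Matrix.head_cons, Matrix.head_fin_const,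
        Matrix.empty_val', Matrix.cons_val_fin_one, Fin.isValue, Fin.mk_zero, Fin.mk_one, Matrix.of_apply] <;>
      rw [e1, e2] <;>
      [linear_combination (-12 * (lplus v * (17 + 12 * Real.sqrt 2 : ℝ) ^ (-(i : ℤ))
          + lminus v * (17 + 12 * Real.sqrt 2 : ℝ) ^ (-(-(i : ℤ))))) * s_sq;
       linear_combination (12 * (lplus v * (17 + 12 * Real.sqrt 2 : ℝ) ^ (-(i : ℤ))
          + lminus v * (17 + 12 * Real.sqrt 2 : ℝ) ^ (-(-(i : ℤ))))) * s_sq]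

theorem stmt_6 (v : Fin 2 → ℝ) (hp : 0 < lplus v) (hm : 0 < lminus v) :
    ∃ k : ℤ, 0 ≤ ((!![(-1 : ℝ), -6; 6, 35] ^ k).mulVec v) 0 ∧
      0 ≤ ((!![(-1 : ℝ), -6; 6, 35] ^ k).mulVec v) 0 +
        6 * ((!![(-1 : ℝ), -6; 6, 35] ^ k).mulVec v) 1 := by
  set s := Real.sqrt 2 with hs
  set a := lplus v with ha'
  set b := lminus v with hb'
  have hL : (0 : ℝ) < 99 - 70 * s := by nlinarith [s_lt]
  have hx : (0 : ℝ) < a / (b * (99 - 70 * s)) := div_pos hp (mul_pos hm hL)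
  have hy : (1 : ℝ) < (17 + 12 * s) ^ 2 := by nlinarith [s_pos]
  obtain ⟨n, h1, h2⟩ := exists_mem_Ico_zpow hx hy
  refine ⟨-n, ?_⟩
  set Q : ℝ := (17 + 12 * s) ^ (n : ℤ) with hQ'
  have hQ : 0 < Q := zpow_pos (by nlinarith [s_pos]) n
  have hsq : ((17 + 12 * s : ℝ) ^ 2) ^ (n : ℤ) = Q * Q := by
    rw [pow_two, mul_zpow]
  have hsq1 : ((17 + 12 * s : ℝ) ^ 2) ^ ((n : ℤ) + 1) = (Q * (17 + 12 * s)) * (Q * (17 + 12 * s)) := by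
    rw [pow_two, mul_zpow, zpow_add_one₀ lam_ne]
  rw [hsq] at h1
  rw [hsq1] at h2
  have hlow : (99 - 70 * s) * (b * (Q * Q)) ≤ a := by
    have := (le_div_iff₀ (mul_pos hm hL)).mp h1
    nlinarith [this]
  have hhigh : a < (3 + 2 * s) * (b * (Q * Q)) := by
    have h2' := (div_lt_iff₀ (mul_pos hm hL)).mp h2
    have hident : (Q * (17 + 12 * s)) * (Q * (17 + 12 * s)) * (b * (99 - 70 * s))
        = (3 + 2 * s) * (b * (Q * Q)) := by
      linear_combination (b * Q * Q * (-14304 - 10080 * s)) * s_sq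
    linarith [h2', hident.symm ▸ h2']
  -- rewrite the goal using `key`
  rw [key]
  simp only [neg_neg, Matrix.cons_val_zero, Matrix.cons_val_one, Matrix.head_cons]
  have hQinv : (17 + 12 * s : ℝ) ^ (-n) = Q⁻¹ := by rw [zpow_neg]
  rw [hQinv]
  have hs2' : (s * s - 2) * (b * (Q * Q)) = 0 := by
    rw [s_sq]; ring
  have hA' : 0 ≤ a * (1 - s) + b * (Q * Q) * (1 + s) := by
    have h3 := mul_lt_mul_of_pos_right hhigh (show (0:ℝ) < s - 1 by linarith [s_gt_one])
    nlinarith [h3, hs2']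
  have hB' : 0 ≤ a * (7 + 5 * s) + b * (Q * Q) * (7 - 5 * s) := by
    have h4 := mul_le_mul_of_nonneg_right hlow (show (0:ℝ) ≤ 7 + 5 * s by nlinarith [s_pos])
    nlinarith [h4, hs2']
  constructor
  · have : a * Q⁻¹ * (1 - s) + b * Q * (1 + s)
        = (a * (1 - s) + b * (Q * Q) * (1 + s)) / Q := by
      field_simp
    rw [this]
    exact div_nonneg hA' hQ.le
  · have : (a * Q⁻¹ * (1 - s) + b * Q * (1 + s))
        + 6 * (a * Q⁻¹ * (1 + s) + b * Q * (1 - s))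
        = (a * (7 + 5 * s) + b * (Q * Q) * (7 - 5 * s)) / Q := by
      field_simp
      ring
    rw [this]
    exact div_nonneg hB' hQ.le
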